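/- Let C ⊂ R^3 be the image of an injective C² arc-length parametrized curve γ : [0,L] → R^3 that is not contained in any straight line (γ'' ≢ 0). Then the 6×6 matrix K̂ with entries K̂_{αβ} := (1/2)∫_C k(τ(x)) v_α(x) · v_β(x) dH¹(x), where k(p) = 8π(Id − (1/2)p⊗p), τ is the unit tangent, v_α(x) = e_α for α = 1,2,3 and v_α(x) = e_{α−3} ∧ x for α = 4,5,6, is symmetric positive definite; indeed K̂ξ·ξ ≥ 2π ∫_C |v + ω ∧ x|² dH¹(x) > 0 for all ξ = (v, ω) ≠ 0. -/

import Mathlib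

open Real Matrix Set intervalIntegral Topology Filter MeasureTheory

noncomputable section

abbrev E3 := EuclideanSpace ℝ (Fin 3)

/-- `k(p) = 8π(Id − (1/2) p⊗p)`. -/
def kmat (p : Fin 3 → ℝ) : Matrix (Fin 3) (Fin 3) ℝ :=
  (8 * π) • (1 - (1/2 : ℝ) • Matrix.vecMulVec p p)

/-- The elementary rigid velocity fields: `v_α(x) = e_α` for `α = 1,2,3` and
`v_α(x) = e_{α−3} ∧ x` for `α = 4,5,6`. -/
def rigidField (α : Fin 6) (x : Fin 3 → ℝ) : Fin 3 → ℝ :=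
  if h : (α : ℕ) < 3 then Pi.single (⟨(α : ℕ), h⟩ : Fin 3) (1 : ℝ)
  else crossProduct (Pi.single (⟨(α : ℕ) - 3, by omega⟩ : Fin 3) (1 : ℝ)) x

/-- Assembling `ξ = (v, ω) ∈ ℝ⁶`. -/
def assemble (v w : Fin 3 → ℝ) : Fin 6 → ℝ := fun α =>
  if h : (α : ℕ) < 3 then v ⟨(α : ℕ), h⟩ else w ⟨(α : ℕ) - 3, by omega⟩

lemma kmat_apply (p : Fin 3 → ℝ) (i j : Fin 3) :
    kmat p i j = 8 * π * ((if i = j then (1:ℝ) else 0) - 1/2 * (p i * p j)) := by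
  simp [kmat, Matrix.one_apply, Matrix.vecMulVec_apply]

lemma bilin_form (p a b : Fin 3 → ℝ) :
    (kmat p).mulVec a ⬝ᵥ b
      = 8 * π * (∑ i, a i * b i) - 4 * π * ((∑ i, p i * a i) * (∑ i, p i * b i)) := by
  simp [Matrix.mulVec, dotProduct, kmat_apply, Fin.sum_univ_three]
  ring

lemma rf0 (x : Fin 3 → ℝ) : rigidField 0 x = ![1,0,0] := by
  funext i; fin_cases i <;> rfl
lemma rf1 (x : Fin 3 → ℝ) : rigidField 1 x = ![0,1,0] := by
  funext i; fin_cases i <;> rfl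
lemma rf2 (x : Fin 3 → ℝ) : rigidField 2 x = ![0,0,1] := by
  funext i; fin_cases i <;> rfl
lemma rf3 (x : Fin 3 → ℝ) : rigidField 3 x = ![0, - x 2, x 1] := by
  funext i; rw [rigidField, dif_neg (by decide)]
  fin_cases i <;> simp [cross_apply, Pi.single_apply, show ((3:Fin 6):ℕ) - 3 = 0 by decide]
lemma rf4 (x : Fin 3 → ℝ) : rigidField 4 x = ![x 2, 0, - x 0] := by
  funext i; rw [rigidField, dif_neg (by decide)]
  fin_cases i <;> simp [cross_apply, Pi.single_apply, show ((4:Fin 6):ℕ) - 3 = 1 by decide]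
lemma rf5 (x : Fin 3 → ℝ) : rigidField 5 x = ![- x 1, x 0, 0] := by
  funext i; rw [rigidField, dif_neg (by decide)]
  fin_cases i <;> simp [cross_apply, Pi.single_apply, show ((5:Fin 6):ℕ) - 3 = 2 by decide]

lemma asm_vals (v w : Fin 3 → ℝ) :
    assemble v w 0 = v 0 ∧ assemble v w 1 = v 1 ∧ assemble v w 2 = v 2 ∧
    assemble v w 3 = w 0 ∧ assemble v w 4 = w 1 ∧ assemble v w 5 = w 2 := by
  refine ⟨rfl, rfl, rfl, ?_, ?_, ?_⟩ <;>
    · rw [assemble.eq_def, dif_neg (by decide)]; rfl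

lemma crossP_apply (a b : Fin 3 → ℝ) :
    crossProduct a b 0 = a 1 * b 2 - a 2 * b 1 ∧
    crossProduct a b 1 = a 2 * b 0 - a 0 * b 2 ∧
    crossProduct a b 2 = a 0 * b 1 - a 1 * b 0 := ⟨rfl, rfl, rfl⟩

lemma pt_sum (p x v w : Fin 3 → ℝ) :
    ∑ β : Fin 6, (∑ α : Fin 6, ((1/2) * ((kmat p).mulVec (rigidField β x) ⬝ᵥ rigidField α x)) * assemble v w α) * assemble v w β
    = (1/2) * ((kmat p).mulVec (fun i => v i + crossProduct w x i) ⬝ᵥ (fun i => v i + crossProduct w x i)) := by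
  obtain ⟨a0, a1, a2, a3, a4, a5⟩ := asm_vals v w
  obtain ⟨c0, c1, c2⟩ := crossP_apply w x
  simp only [Fin.sum_univ_six, rf0, rf1, rf2, rf3, rf4, rf5, a0, a1, a2, a3, a4, a5,
    bilin_form, Fin.sum_univ_three, c0, c1, c2]
  simp only [Matrix.cons_val_zero, Matrix.cons_val_one, Matrix.head_cons,
    Matrix.cons_val_two, Matrix.tail_cons]
  ring

lemma lower_pt (p u : Fin 3 → ℝ) (hp : ∑ i, p i ^ 2 = 1) :
    4 * π * (∑ i, u i ^ 2) ≤ (kmat p).mulVec u ⬝ᵥ u := by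
  rw [bilin_form]
  have hcs : (∑ i, p i * u i) ^ 2 ≤ (∑ i, p i ^ 2) * (∑ i, u i ^ 2) :=
    Finset.sum_mul_sq_le_sq_mul_sq _ _ _
  rw [hp, one_mul] at hcs
  have h2 : ∑ i, u i * u i = ∑ i, u i ^ 2 := by
    refine Finset.sum_congr rfl fun i _ => (sq (u i)) ▸ (pow_two (u i)).symm
  rw [h2]
  nlinarith [Real.pi_pos]

lemma cross_zero_rel (w p : Fin 3 → ℝ) (h : crossProduct w p = 0) (i : Fin 3) :
    p i * (∑ j, w j ^ 2) = w i * (∑ j, p j * w j) := by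
  have h0 : w 1 * p 2 - w 2 * p 1 = (0:ℝ) := congrFun h 0
  have h1 : w 2 * p 0 - w 0 * p 2 = (0:ℝ) := congrFun h 1
  have h2 : w 0 * p 1 - w 1 * p 0 = (0:ℝ) := congrFun h 2
  have e0 : p 0 * (∑ j, w j ^ 2) = w 0 * (∑ j, p j * w j) := by
    simp only [Fin.sum_univ_three]
    linear_combination (-(w 1)) * h2 + w 2 * h1
  have e1 : p 1 * (∑ j, w j ^ 2) = w 1 * (∑ j, p j * w j) := by
    simp only [Fin.sum_univ_three]
    linear_combination w 0 * h2 + (-(w 2)) * h0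
  have e2 : p 2 * (∑ j, w j ^ 2) = w 2 * (∑ j, p j * w j) := by
    simp only [Fin.sum_univ_three]
    linear_combination (-(w 0)) * h1 + w 1 * h0
  fin_cases i <;> assumption

lemma eqOn_Icc_of_eqOn_Ioo {L : ℝ} (hL : 0 < L) {X : Type*} [TopologicalSpace X] [T2Space X]
    {f : ℝ → X} {c : X} (hf : ContinuousOn f (Icc 0 L)) (h : ∀ s ∈ Ioo 0 L, f s = c) :
    ∀ s ∈ Icc 0 L, f s = c := by
  intro s hs
  have hne : (𝓝[Ioo (0:ℝ) L] s).NeBot := by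
    rw [← mem_closure_iff_nhdsWithin_neBot, closure_Ioo hL.ne]
    exact hs
  have t1 : Filter.Tendsto f (𝓝[Ioo (0:ℝ) L] s) (𝓝 (f s)) :=
    (hf s hs).mono Ioo_subset_Icc_self
  have t2 : Filter.Tendsto f (𝓝[Ioo (0:ℝ) L] s) (𝓝 c) := by
    refine Filter.Tendsto.congr' ?_ tendsto_const_nhds
    filter_upwards [self_mem_nhdsWithin] with x hx using (h x hx).symm
  exact tendsto_nhds_unique t1 t2

set_option maxHeartbeats 1000000 in
theorem stmt19 (L : ℝ) (hL : 0 < L) (γ γ' γ'' : ℝ → E3)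
    (hγ' : ∀ s ∈ Icc (0:ℝ) L, HasDerivWithinAt γ (γ' s) (Icc 0 L) s)
    (hγ'' : ∀ s ∈ Icc (0:ℝ) L, HasDerivWithinAt γ' (γ'' s) (Icc 0 L) s)
    (harc : ∀ s ∈ Icc (0:ℝ) L, ‖γ' s‖ = 1)
    (hinj : InjOn γ (Icc 0 L))
    (hnotline : ∃ s ∈ Icc (0:ℝ) L, γ'' s ≠ 0)
    (Khat : Matrix (Fin 6) (Fin 6) ℝ)
    (hKhat : ∀ α β : Fin 6, Khat α β =
      (1/2) * ∫ s in (0:ℝ)..L,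
        ((kmat (γ' s)).mulVec (rigidField α (γ s))) ⬝ᵥ (rigidField β (γ s))) :
    Khat.IsSymm ∧
      ∀ v w : Fin 3 → ℝ, ¬(v = 0 ∧ w = 0) →
        (2 * π) * (∫ s in (0:ℝ)..L, ∑ i, (v i + crossProduct w (γ s) i) ^ 2) ≤
            Khat.mulVec (assemble v w) ⬝ᵥ assemble v w ∧
        0 < (2 * π) * (∫ s in (0:ℝ)..L, ∑ i, (v i + crossProduct w (γ s) i) ^ 2) := by
  have hπ := Real.pi_pos
  have h0L : (0:ℝ) ≤ L := hL.le
  have huIcc : uIcc (0:ℝ) L = Icc 0 L := uIcc_of_le h0L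
  -- continuity of the data
  have hγc : ContinuousOn γ (Icc 0 L) := fun s hs => (hγ' s hs).continuousWithinAt
  have hγ'c : ContinuousOn γ' (Icc 0 L) := fun s hs => (hγ'' s hs).continuousWithinAt
  have hcoord : ∀ i : Fin 3, Continuous fun x : E3 => x i := fun i =>
    (EuclideanSpace.proj (𝕜 := ℝ) i).continuous
  have hγci : ∀ i, ContinuousOn (fun s => γ s i) (Icc 0 L) := fun i =>
    (hcoord i).comp_continuousOn hγc
  have hγ'ci : ∀ i, ContinuousOn (fun s => γ' s i) (Icc 0 L) := fun i =>
    (hcoord i).comp_continuousOn hγ'c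
  have hrfc : ∀ (α : Fin 6) (i : Fin 3),
      ContinuousOn (fun s => rigidField α (γ s) i) (Icc 0 L) := by
    intro α i
    by_cases h : (α : ℕ) < 3
    · simp only [rigidField, dif_pos h]; exact continuousOn_const
    · simp only [rigidField, dif_neg h]
      fin_cases i
      · exact (continuousOn_const.mul (hγci 2)).sub (continuousOn_const.mul (hγci 1))
      · exact (continuousOn_const.mul (hγci 0)).sub (continuousOn_const.mul (hγci 2))
      · exact (continuousOn_const.mul (hγci 1)).sub (continuousOn_const.mul (hγci 0))
  have hfc : ∀ α β : Fin 6, ContinuousOn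
      (fun s => (kmat (γ' s)).mulVec (rigidField α (γ s)) ⬝ᵥ rigidField β (γ s)) (Icc 0 L) := by
    intro α β
    simp only [bilin_form]
    refine ContinuousOn.sub (continuousOn_const.mul ?_)
      (continuousOn_const.mul (ContinuousOn.mul ?_ ?_))
    · exact continuousOn_finset_sum _ fun i _ => (hrfc α i).mul (hrfc β i)
    · exact continuousOn_finset_sum _ fun i _ => (hγ'ci i).mul (hrfc α i)
    · exact continuousOn_finset_sum _ fun i _ => (hγ'ci i).mul (hrfc β i)
  have hI : ∀ α β : Fin 6, IntervalIntegrable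
      (fun s => (kmat (γ' s)).mulVec (rigidField α (γ s)) ⬝ᵥ rigidField β (γ s))
      MeasureTheory.volume 0 L := fun α β =>
    ((hfc α β).mono (by rw [huIcc])).intervalIntegrable
  -- symmetry
  have hsym : Khat.IsSymm := by
    have h : ∀ α β : Fin 6, Khat α β = Khat β α := by
      intro α β
      rw [hKhat, hKhat]
      congr 1
      refine intervalIntegral.integral_congr fun s _ => ?_
      simp only [bilin_form]
      rw [show ∑ i, rigidField α (γ s) i * rigidField β (γ s) i
          = ∑ i, rigidField β (γ s) i * rigidField α (γ s) i from
        Finset.sum_congr rfl fun i _ => mul_comm _ _]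
      ring
    exact Matrix.ext fun i j => (Matrix.transpose_apply Khat i j).trans (h j i)
  refine ⟨hsym, ?_⟩
  intro v w hvw
  set ξ : Fin 6 → ℝ := assemble v w with hξ
  -- the quadratic form as an integral
  have key : Khat.mulVec ξ ⬝ᵥ ξ
      = (1/2) * ∫ s in (0:ℝ)..L,
          (kmat (γ' s)).mulVec (fun i => v i + crossProduct w (γ s) i) ⬝ᵥ
            (fun i => v i + crossProduct w (γ s) i) := by
    have inner_int : ∀ β : Fin 6, IntervalIntegrable
        (fun s => (∑ α : Fin 6, ((1/2) * ((kmat (γ' s)).mulVec (rigidField β (γ s)) ⬝ᵥ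
          rigidField α (γ s))) * ξ α) * ξ β) MeasureTheory.volume 0 L := by
      intro β
      refine IntervalIntegrable.mul_const ?_ _
      exact IntervalIntegrable.sum
        (f := fun α s => ((1/2) * ((kmat (γ' s)).mulVec (rigidField β (γ s)) ⬝ᵥ
          rigidField α (γ s))) * ξ α) Finset.univ
        (fun α _ => ((hI β α).const_mul _).mul_const _)
    have e1 : Khat.mulVec ξ ⬝ᵥ ξ
        = ∑ β : Fin 6, (∑ α : Fin 6, Khat β α * ξ α) * ξ β := rfl
    rw [e1]
    have e2 : ∀ β α : Fin 6, Khat β α * ξ α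
        = ∫ s in (0:ℝ)..L, ((1/2) * ((kmat (γ' s)).mulVec (rigidField β (γ s)) ⬝ᵥ
            rigidField α (γ s))) * ξ α := by
      intro β α
      rw [intervalIntegral.integral_mul_const, intervalIntegral.integral_const_mul, hKhat]
    have e3 : ∀ β : Fin 6, (∑ α : Fin 6, Khat β α * ξ α) * ξ β
        = ∫ s in (0:ℝ)..L, (∑ α : Fin 6, ((1/2) * ((kmat (γ' s)).mulVec (rigidField β (γ s)) ⬝ᵥ
            rigidField α (γ s))) * ξ α) * ξ β := by
      intro β
      rw [intervalIntegral.integral_mul_const,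
        intervalIntegral.integral_finset_sum
          (f := fun α s => ((1/2) * ((kmat (γ' s)).mulVec (rigidField β (γ s)) ⬝ᵥ
            rigidField α (γ s))) * ξ α)
          (fun α _ => ((hI β α).const_mul _).mul_const _)]
      congr 1
      exact Finset.sum_congr rfl fun α _ => e2 β α
    calc ∑ β : Fin 6, (∑ α : Fin 6, Khat β α * ξ α) * ξ β
        = ∑ β : Fin 6, ∫ s in (0:ℝ)..L, (∑ α : Fin 6, ((1/2) * ((kmat (γ' s)).mulVec
            (rigidField β (γ s)) ⬝ᵥ rigidField α (γ s))) * ξ α) * ξ β :=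
          Finset.sum_congr rfl fun β _ => e3 β
      _ = ∫ s in (0:ℝ)..L, ∑ β : Fin 6, (∑ α : Fin 6, ((1/2) * ((kmat (γ' s)).mulVec
            (rigidField β (γ s)) ⬝ᵥ rigidField α (γ s))) * ξ α) * ξ β :=
          (intervalIntegral.integral_finset_sum
            (f := fun β s => (∑ α : Fin 6, ((1/2) * ((kmat (γ' s)).mulVec
              (rigidField β (γ s)) ⬝ᵥ rigidField α (γ s))) * ξ α) * ξ β)
            (fun β _ => inner_int β)).symm
      _ = ∫ s in (0:ℝ)..L, (1/2) * ((kmat (γ' s)).mulVec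
            (fun i => v i + crossProduct w (γ s) i) ⬝ᵥ
            (fun i => v i + crossProduct w (γ s) i)) := by
          refine intervalIntegral.integral_congr fun s _ => ?_
          exact pt_sum (γ' s) (γ s) v w
      _ = (1/2) * ∫ s in (0:ℝ)..L, (kmat (γ' s)).mulVec
            (fun i => v i + crossProduct w (γ s) i) ⬝ᵥ
            (fun i => v i + crossProduct w (γ s) i) :=
          intervalIntegral.integral_const_mul _ _
  -- continuity and integrability of the comparison integrands
  have huci : ∀ i : Fin 3, ContinuousOn (fun s => v i + crossProduct w (γ s) i) (Icc 0 L) := by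
    intro i
    fin_cases i
    · exact continuousOn_const.add
        ((continuousOn_const.mul (hγci 2)).sub (continuousOn_const.mul (hγci 1)))
    · exact continuousOn_const.add
        ((continuousOn_const.mul (hγci 0)).sub (continuousOn_const.mul (hγci 2)))
    · exact continuousOn_const.add
        ((continuousOn_const.mul (hγci 1)).sub (continuousOn_const.mul (hγci 0)))
  have hGc : ContinuousOn (fun s => ∑ i, (v i + crossProduct w (γ s) i) ^ 2) (Icc 0 L) :=
    continuousOn_finset_sum _ fun i _ => (huci i).pow 2
  have hGint : IntervalIntegrable (fun s => ∑ i, (v i + crossProduct w (γ s) i) ^ 2)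
      MeasureTheory.volume 0 L := (hGc.mono (by rw [huIcc])).intervalIntegrable
  have hFc : ContinuousOn (fun s => (kmat (γ' s)).mulVec
      (fun i => v i + crossProduct w (γ s) i) ⬝ᵥ (fun i => v i + crossProduct w (γ s) i))
      (Icc 0 L) := by
    simp only [bilin_form]
    refine ContinuousOn.sub (continuousOn_const.mul ?_)
      (continuousOn_const.mul (ContinuousOn.mul ?_ ?_))
    · exact continuousOn_finset_sum _ fun i _ => (huci i).mul (huci i)
    · exact continuousOn_finset_sum _ fun i _ => (hγ'ci i).mul (huci i)
    · exact continuousOn_finset_sum _ fun i _ => (hγ'ci i).mul (huci i)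
  have hFint : IntervalIntegrable (fun s => (kmat (γ' s)).mulVec
      (fun i => v i + crossProduct w (γ s) i) ⬝ᵥ (fun i => v i + crossProduct w (γ s) i))
      MeasureTheory.volume 0 L := (hFc.mono (by rw [huIcc])).intervalIntegrable
  -- arc-length normalisation in coordinates
  have hp1 : ∀ s ∈ Icc (0:ℝ) L, ∑ i, γ' s i ^ 2 = 1 := by
    intro s hs
    have h1 := harc s hs
    rw [EuclideanSpace.norm_eq] at h1
    have h2 : √(∑ i, ‖γ' s i‖ ^ 2) = 1 := h1
    have h3 : ∑ i, ‖γ' s i‖ ^ 2 = 1 := by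
      have := congrArg (fun t : ℝ => t ^ 2) h2
      simpa [Real.sq_sqrt (Finset.sum_nonneg fun i _ => sq_nonneg _)] using this
    simpa [sq_abs] using h3
  -- the pointwise lower bound, integrated
  have hineq : (2 * π) * (∫ s in (0:ℝ)..L, ∑ i, (v i + crossProduct w (γ s) i) ^ 2) ≤
      Khat.mulVec ξ ⬝ᵥ ξ := by
    rw [key]
    have hmono : ∫ s in (0:ℝ)..L, (4 * π) * ∑ i, (v i + crossProduct w (γ s) i) ^ 2 ≤
        ∫ s in (0:ℝ)..L, (kmat (γ' s)).mulVec
          (fun i => v i + crossProduct w (γ s) i) ⬝ᵥ (fun i => v i + crossProduct w (γ s) i) := by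
      refine intervalIntegral.integral_mono_on h0L (hGint.const_mul _) hFint fun s hs => ?_
      exact lower_pt (γ' s) _ (hp1 s hs)
    rw [intervalIntegral.integral_const_mul] at hmono
    nlinarith [hmono]
  refine ⟨hineq, ?_⟩
  -- positivity
  have hGnonneg : ∀ s, (0:ℝ) ≤ ∑ i, (v i + crossProduct w (γ s) i) ^ 2 :=
    fun s => Finset.sum_nonneg fun i _ => sq_nonneg _
  have hpos : 0 < ∫ s in (0:ℝ)..L, ∑ i, (v i + crossProduct w (γ s) i) ^ 2 := by
    rcases lt_or_ge 0 (∫ s in (0:ℝ)..L, ∑ i, (v i + crossProduct w (γ s) i) ^ 2) with h | h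
    · exact h
    exfalso
    have hz : ∫ s in (0:ℝ)..L, ∑ i, (v i + crossProduct w (γ s) i) ^ 2 = 0 :=
      le_antisymm h (intervalIntegral.integral_nonneg h0L fun s _ => hGnonneg s)
    have hae : (fun s => ∑ i, (v i + crossProduct w (γ s) i) ^ 2)
        =ᵐ[MeasureTheory.volume.restrict (Ioc 0 L)] 0 := by
      rw [← intervalIntegral.integral_eq_zero_iff_of_le_of_nonneg_ae h0L
        (Filter.Eventually.of_forall fun s => hGnonneg s) hGint]
      exact hz
    -- hence the integrand vanishes on Ioo 0 L
    have hIoo : ∀ s ∈ Ioo (0:ℝ) L, ∑ i, (v i + crossProduct w (γ s) i) ^ 2 = 0 := by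
      intro s hs
      by_contra hGs
      have hCA : ContinuousAt (fun s => ∑ i, (v i + crossProduct w (γ s) i) ^ 2) s :=
        (hGc s (Ioo_subset_Icc_self hs)).continuousAt (Icc_mem_nhds hs.1 hs.2)
      have hU : {t : ℝ | ∑ i, (v i + crossProduct w (γ t) i) ^ 2 ≠ 0} ∩ Ioo 0 L ∈ 𝓝 s := by
        refine Filter.inter_mem ?_ (Ioo_mem_nhds hs.1 hs.2)
        exact hCA.preimage_mem_nhds (isOpen_compl_singleton.mem_nhds hGs)
      have hposvol : 0 < MeasureTheory.volume
          ({t : ℝ | ∑ i, (v i + crossProduct w (γ t) i) ^ 2 ≠ 0} ∩ Ioo 0 L) :=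
        MeasureTheory.Measure.measure_pos_of_mem_nhds _ hU
      have hz2 : MeasureTheory.volume
          ({t : ℝ | ∑ i, (v i + crossProduct w (γ t) i) ^ 2 ≠ 0} ∩ Ioc 0 L) = 0 := by
        have := hae
        rw [Filter.EventuallyEq, MeasureTheory.ae_iff] at this
        rw [MeasureTheory.Measure.restrict_apply' measurableSet_Ioc] at this
        simpa using this
      have hsub : {t : ℝ | ∑ i, (v i + crossProduct w (γ t) i) ^ 2 ≠ 0} ∩ Ioo 0 L ⊆
          {t : ℝ | ∑ i, (v i + crossProduct w (γ t) i) ^ 2 ≠ 0} ∩ Ioc 0 L :=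
        inter_subset_inter_right _ Ioo_subset_Ioc_self
      exact absurd (MeasureTheory.measure_mono_null hsub hz2) hposvol.ne'
    have hIcc : ∀ s ∈ Icc (0:ℝ) L, ∑ i, (v i + crossProduct w (γ s) i) ^ 2 = 0 :=
      eqOn_Icc_of_eqOn_Ioo hL hGc hIoo
    -- hence v + w ∧ γ(s) = 0 on [0, L]
    have hu0 : ∀ s ∈ Icc (0:ℝ) L, ∀ i, v i + crossProduct w (γ s) i = 0 := by
      intro s hs i
      have := (Finset.sum_eq_zero_iff_of_nonneg fun j _ => sq_nonneg
        (v j + crossProduct w (γ s) j)).1 (hIcc s hs) i (Finset.mem_univ i)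
      exact pow_eq_zero_iff (by norm_num : (2:ℕ) ≠ 0) |>.1 this
    -- now derive a contradiction
    by_cases hw : w = 0
    · have hv : v = 0 := by
        funext i
        have h0 := hu0 0 (left_mem_Icc.2 h0L) i
        rw [hw] at h0
        simpa using h0
      exact hvw ⟨hv, hw⟩
    · have hw2 : 0 < ∑ j, w j ^ 2 := by
        rcases Function.ne_iff.1 hw with ⟨j, hj⟩
        exact Finset.sum_pos' (fun k _ => sq_nonneg _) ⟨j, Finset.mem_univ _, lt_of_le_of_ne (sq_nonneg _) (Ne.symm (pow_ne_zero _ hj))⟩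
      set φ : E3 →L[ℝ] (Fin 3 → ℝ) :=
        LinearMap.toContinuousLinearMap
          ((crossProduct w).comp (WithLp.linearEquiv 2 ℝ (Fin 3 → ℝ)).toLinearMap) with hφ
      have hφapp : ∀ y : E3, φ y = crossProduct w y := fun y => rfl
      have hgd : ∀ s ∈ Icc (0:ℝ) L, HasDerivWithinAt (fun t => φ (γ t)) (φ (γ' s)) (Icc 0 L) s :=
        fun s hs => (φ.hasFDerivAt.comp_hasDerivWithinAt s (hγ' s hs))
      have hgconst : ∀ t ∈ Icc (0:ℝ) L, φ (γ t) = fun i => - v i := by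
        intro t ht; funext i
        have h1 := hu0 t ht i
        rw [hφapp]
        have : crossProduct w (γ t) i = - v i := by linarith
        exact this
      have hcross0 : ∀ s ∈ Icc (0:ℝ) L, crossProduct w (γ' s) = 0 := by
        intro s hs
        have hud : UniqueDiffWithinAt ℝ (Icc (0:ℝ) L) s := (uniqueDiffOn_Icc hL) s hs
        have h1 : HasDerivWithinAt (fun t => φ (γ t)) 0 (Icc 0 L) s :=
          (hasDerivWithinAt_const s _ (fun i => - v i)).congr
            (fun y hy => hgconst y hy) (hgconst s hs)
        have h2 : φ (γ' s) = 0 := by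
          rw [← (hgd s hs).derivWithin hud, h1.derivWithin hud]
        rw [← hφapp]
        exact h2
      set c : ℝ → ℝ := fun s => (∑ j, γ' s j * w j) / (∑ j, w j ^ 2) with hc
      have hpar : ∀ s ∈ Icc (0:ℝ) L, ∀ i, γ' s i = c s * w i := by
        intro s hs i
        have hrel := cross_zero_rel w (γ' s) (hcross0 s hs) i
        rw [hc]
        rw [div_mul_eq_mul_div, eq_div_iff hw2.ne']
        linear_combination hrel
      have h0mem : (0:ℝ) ∈ Icc (0:ℝ) L := left_mem_Icc.2 h0L
      have hc2 : ∀ s ∈ Icc (0:ℝ) L, c s ^ 2 * (∑ j, w j ^ 2) = 1 := by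
        intro s hs
        have h1 := hp1 s hs
        have h2 : ∑ i, γ' s i ^ 2 = c s ^ 2 * ∑ j, w j ^ 2 := by
          calc ∑ i, γ' s i ^ 2 = ∑ i, (c s * w i) ^ 2 :=
                Finset.sum_congr rfl fun i _ => by rw [hpar s hs i]
            _ = c s ^ 2 * ∑ j, w j ^ 2 := by
                rw [Finset.mul_sum]
                exact Finset.sum_congr rfl fun i _ => by ring
        linarith
      have hcont_c : ContinuousOn c (Icc 0 L) := by
        rw [hc]
        exact (continuousOn_finset_sum _ fun j _ => (hγ'ci j).mul continuousOn_const).div_const _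
      have hcne : ∀ s ∈ Icc (0:ℝ) L, c s ≠ 0 := by
        intro s hs h0
        have h1 := hc2 s hs
        rw [h0] at h1
        norm_num at h1
      have hcconst : ∀ s ∈ Icc (0:ℝ) L, c s = c 0 := by
        intro s hs
        by_contra hnec
        have hsq : c s ^ 2 = c 0 ^ 2 :=
          mul_right_cancel₀ hw2.ne' (by rw [hc2 s hs, hc2 0 h0mem])
        have hneg : c s = - c 0 := by
          have hfac : (c s - c 0) * (c s + c 0) = 0 := by linear_combination hsq
          rcases mul_eq_zero.1 hfac with h | h
          · exact absurd (by linarith : c s = c 0) hnec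
          · linarith
        have hsubI : uIcc (0:ℝ) s ⊆ Icc 0 L := by
          rw [uIcc_of_le hs.1]
          exact Icc_subset_Icc le_rfl hs.2
        have hmem0 : (0:ℝ) ∈ uIcc (c 0) (c s) := by
          rw [hneg, mem_uIcc]
          rcases le_total (c 0) 0 with h | h
          · left; constructor <;> linarith
          · right; constructor <;> linarith
        obtain ⟨t, ht, hct⟩ := intermediate_value_uIcc (hcont_c.mono hsubI) hmem0
        exact hcne t (hsubI ht) hct
      have hγ'const : ∀ s ∈ Icc (0:ℝ) L, γ' s = γ' 0 := by
        intro s hs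
        ext i
        rw [hpar s hs i, hpar 0 h0mem i, hcconst s hs]
      obtain ⟨s₀, hs₀, hne0⟩ := hnotline
      apply hne0
      have hud : UniqueDiffWithinAt ℝ (Icc (0:ℝ) L) s₀ := (uniqueDiffOn_Icc hL) s₀ hs₀
      have h1 : HasDerivWithinAt γ' 0 (Icc 0 L) s₀ :=
        (hasDerivWithinAt_const s₀ _ (γ' 0)).congr (fun y hy => hγ'const y hy) (hγ'const s₀ hs₀)
      rw [← (hγ'' s₀ hs₀).derivWithin hud, h1.derivWithin hud]
  have : 0 < (2*π) * (∫ s in (0:ℝ)..L, ∑ i, (v i + crossProduct w (γ s) i) ^ 2) := by positivity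
  exact this
end
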